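/- Let q be a prime power and t ≥ 2 an integer. If (a_1,b_1), ..., (a_t,b_t) are nonzero pairs in F_{q^{t-1}} × F_{q^{t-1}} that are pairwise non-proportional (i.e., they represent t distinct points of the projective line P_1(F_{q^{t-1}})), then the t vectors w(a_1,b_1), ..., w(a_t,b_t) are linearly independent over F_{q^{t-1}}. (Equivalently: any t points of the variety 𝒱 are in general position.) -/
import Mathlib


/-- The coordinate vector `w(a,b)` of the point
`(a,b) ⊗ (a^q,b^q) ⊗ ⋯ ⊗ (a^(q^(t-2)),b^(q^(t-2)))` of the variety `𝒱`: it is indexed by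
the subsets `S` of `T = {0, 1, …, t-2}` (realised as `Finset (Fin (t-1))`), the coordinate
at `S` being `(∏_{i ∈ S} a^(q^i)) * (∏_{j ∈ T \ S} b^(q^j))`. -/
def wvec {K : Type*} [Field K] (q t : ℕ) (a b : K) : Finset (Fin (t - 1)) → K :=
  fun S => (∏ i ∈ S, a ^ q ^ (i : ℕ)) * (∏ j ∈ Sᶜ, b ^ q ^ (j : ℕ))

/-- If `(a₁,b₁), …, (a_t,b_t)` are nonzero, pairwise non-proportional pairs
in `F_{q^(t-1)} × F_{q^(t-1)}` (i.e. `t` distinct points of the projective line), then the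
`t` vectors `w(a₁,b₁), …, w(a_t,b_t)` are linearly independent over `F_{q^(t-1)}`: any `t`
points of the variety `𝒱` are in general position. -/
theorem wvec_linearIndependent (q t : ℕ) (ht : 2 ≤ t) (hq : IsPrimePow q)
    (K : Type) [Field K] [Fintype K] (hK : Fintype.card K = q ^ (t - 1))
    (a b : Fin t → K) (h0 : ∀ i, (a i, b i) ≠ (0, 0))
    (hprop : ∀ i j, i ≠ j → a i * b j ≠ a j * b i) :
    LinearIndependent K (fun i => wvec q t (a i) (b i)) := by
  obtain ⟨p, e, hp, he, rfl⟩ := hq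
  have hp' : p.Prime := hp.nat_prime
  haveI : Fact p.Prime := ⟨hp'⟩
  haveI hchar : CharP K p := by
    have hr : (ringChar K).Prime ∧ ∃ m : ℕ+, Fintype.card K = ringChar K ^ (m : ℕ) := by
      haveI : CharP K (ringChar K) := ringChar.charP K
      obtain ⟨m, hmp, hm⟩ := FiniteField.card K (ringChar K)
      exact ⟨hmp, m, hm⟩
    obtain ⟨hrp, m, hm⟩ := hr
    have hdvd : p ∣ ringChar K ^ (m : ℕ) := by
      rw [← hm, hK, ← pow_mul]
      exact dvd_pow_self p (Nat.mul_ne_zero (by omega) (by omega))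
    have : p = ringChar K := (Nat.prime_dvd_prime_iff_eq hp' hrp).mp (hp'.dvd_of_dvd_pow hdvd)
    rw [this]; exact ringChar.charP K
  rw [Fintype.linearIndependent_iff]
  intro c hc i
  obtain ⟨n, rfl⟩ : ∃ n, t = n + 1 := ⟨t - 1, by omega⟩
  set σ : Fin (n + 1 - 1) → Fin (n + 1) := i.succAbove with hσ
  -- the key evaluation identity
  have key : ∀ x y : K,
      ∑ S : Finset (Fin (n + 1 - 1)),
          ((∏ k ∈ S, b (σ k) ^ (p ^ e) ^ (k : ℕ)) *
            ∏ k ∈ Sᶜ, -(a (σ k) ^ (p ^ e) ^ (k : ℕ))) * wvec (p ^ e) (n + 1) x y S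
        = ∏ k : Fin (n + 1 - 1), (b (σ k) * x - a (σ k) * y) ^ (p ^ e) ^ (k : ℕ) := by
    intro x y
    have hfac : ∀ k : Fin (n + 1 - 1), (b (σ k) * x - a (σ k) * y) ^ (p ^ e) ^ (k : ℕ)
        = (b (σ k) ^ (p ^ e) ^ (k : ℕ)) * x ^ (p ^ e) ^ (k : ℕ) +
          (-(a (σ k) ^ (p ^ e) ^ (k : ℕ))) * y ^ (p ^ e) ^ (k : ℕ) := by
      intro k
      have hQk : (p ^ e) ^ (k : ℕ) = p ^ (e * (k : ℕ)) := by rw [pow_mul]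
      rw [hQk, sub_pow_char_pow, mul_pow, mul_pow]
      ring
    rw [Finset.prod_congr rfl fun k _ => hfac k, Finset.prod_add, Finset.powerset_univ]
    refine Finset.sum_congr rfl fun S _ => ?_
    rw [← Finset.compl_eq_univ_sdiff]
    simp only [wvec, Finset.prod_mul_distrib]
    ring
  -- product vanishes for j ≠ i
  have hzero : ∀ j : Fin (n + 1), j ≠ i →
      (∏ k : Fin (n + 1 - 1), (b (σ k) * a j - a (σ k) * b j) ^ (p ^ e) ^ (k : ℕ)) = 0 := by
    intro j hj
    obtain ⟨k, hk⟩ := Fin.exists_succAbove_eq hj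
    refine Finset.prod_eq_zero (Finset.mem_univ k) ?_
    rw [hσ] at *
    rw [hk, mul_comm (b j) (a j), sub_self]
    exact zero_pow (pow_ne_zero _ (pow_ne_zero _ hp'.pos.ne'))
  -- product nonzero for j = i
  have hne : (∏ k : Fin (n + 1 - 1), (b (σ k) * a i - a (σ k) * b i) ^ (p ^ e) ^ (k : ℕ)) ≠ 0 := by
    refine Finset.prod_ne_zero_iff.mpr fun k _ => pow_ne_zero _ ?_
    refine sub_ne_zero_of_ne ?_
    have hne' := hprop i (σ k) (Ne.symm (Fin.succAbove_ne i k))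
    rw [mul_comm (b (σ k)) (a i), mul_comm (a (σ k)) (b i)]
    exact fun h => hne' (h.trans (mul_comm _ _))
  -- combine
  have h1 : ∑ j : Fin (n + 1),
      c j * ∏ k : Fin (n + 1 - 1), (b (σ k) * a j - a (σ k) * b j) ^ (p ^ e) ^ (k : ℕ) = 0 := by
    have := congrArg (fun w : Finset (Fin (n + 1 - 1)) → K =>
      ∑ S : Finset (Fin (n + 1 - 1)),
        ((∏ k ∈ S, b (σ k) ^ (p ^ e) ^ (k : ℕ)) *
          ∏ k ∈ Sᶜ, -(a (σ k) ^ (p ^ e) ^ (k : ℕ))) * w S) hc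
    simp only [Finset.sum_apply, Pi.smul_apply, smul_eq_mul, Pi.zero_apply, mul_zero,
      Finset.sum_const_zero, Finset.mul_sum] at this
    rw [Finset.sum_comm] at this
    calc ∑ j : Fin (n + 1),
          c j * ∏ k : Fin (n + 1 - 1), (b (σ k) * a j - a (σ k) * b j) ^ (p ^ e) ^ (k : ℕ)
        = ∑ j : Fin (n + 1), c j * ∑ S : Finset (Fin (n + 1 - 1)),
            ((∏ k ∈ S, b (σ k) ^ (p ^ e) ^ (k : ℕ)) *
              ∏ k ∈ Sᶜ, -(a (σ k) ^ (p ^ e) ^ (k : ℕ))) * wvec (p ^ e) (n + 1) (a j) (b j) S := by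
          exact Finset.sum_congr rfl fun j _ => by rw [key (a j) (b j)]
      _ = 0 := by
          rw [← this]
          refine Finset.sum_congr rfl fun j _ => ?_
          rw [Finset.mul_sum]
          exact Finset.sum_congr rfl fun S _ => by ring
  rw [Finset.sum_eq_single i (fun j _ hj => by rw [hzero j hj, mul_zero])
    (fun h => absurd (Finset.mem_univ i) h)] at h1
  exact (mul_eq_zero.mp h1).resolve_right hne
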